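/- In a homological spark complex (F*, E*, I*), the intersection ker δ₁ ∩ ker δ₂ ⊂ Ĥ^k(F) is isomorphic to H^k(F)/H^k_I(F), where H^k_I(F) denotes the image of Ψ_* : H^k(I) → H^k(F): every spark class with vanishing smooth part and nullcohomologous integral part is represented by a d-closed element a ∈ F^k, well-defined modulo dF^{k-1} + Ψ(Z^k(I)). -/

import Mathlib

/-!
STATEMENT 14. In a homological spark complex `(F*, E*, I*)`, the intersection
`ker δ₁ ∩ ker δ₂ ⊂ Ĥ^k(F)` is isomorphic to `H^k(F)/H^k_I(F)`, where `H^k_I(F)` is the image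
of `Ψ_* : H^k(I) → H^k(F)`: every spark class with vanishing smooth part and nullcohomologous
integral part is represented by a `d`-closed element `a ∈ F^k`, well defined modulo
`dF^{k-1} + Ψ(Z^k(I))`.

Stated for degree `k = j+1`.  `ker δ₁ ∩ ker δ₂` is realized as the subgroup `KerBoth` of
`Ĥ^{j+1}(F)` of classes represented by sparks `(a, r)` with vanishing smooth part
(`da = -Ψ(r)`) and with `r` a boundary; `H^k(F)/Ψ_*H^k(I)` is realized as
`Z^{j+1}(F) ⧸ (dF^j + Ψ(Z^{j+1}(I)))`.
-/

section SparkComplex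

variable (F E I : ℕ → Type) [∀ k, AddCommGroup (F k)] [∀ k, AddCommGroup (E k)]
  [∀ k, AddCommGroup (I k)]
variable (dF : ∀ k, F k →+ F (k + 1)) (dI : ∀ k, I k →+ I (k + 1))
variable (ι : ∀ k, E k →+ F k) (Ψ : ∀ k, I k →+ F k)

/-- The group of sparks of degree `j+1`: pairs `(a, r)` with `da = e - Ψ r` for some `e`,
and `dr = 0`. -/
def SparkGroup (j : ℕ) : AddSubgroup (F (j + 1) × I (j + 1 + 1)) where
  carrier := {p | (∃ e : E (j + 1 + 1), dF (j + 1) p.1 = ι (j + 1 + 1) e - Ψ (j + 1 + 1) p.2) ∧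
    dI (j + 1 + 1) p.2 = 0}
  zero_mem' := ⟨⟨0, by simp⟩, by simp⟩
  add_mem' := by
    rintro p q ⟨⟨e, he⟩, hp⟩ ⟨⟨e', he'⟩, hq⟩
    refine ⟨⟨e + e', ?_⟩, ?_⟩
    · simp only [Prod.fst_add, Prod.snd_add, map_add, he, he']; abel
    · simp [Prod.snd_add, map_add, hp, hq]
  neg_mem' := by
    rintro p ⟨⟨e, he⟩, hp⟩
    refine ⟨⟨-e, ?_⟩, ?_⟩
    · simp only [Prod.fst_neg, Prod.snd_neg, map_neg, he]; abel
    · simp [map_neg, hp]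

/-- The subgroup of pairs `(db + Ψ s, -ds)` implementing spark equivalence in degree `j+1`. -/
def SparkEquivSub (j : ℕ) : AddSubgroup (F (j + 1) × I (j + 1 + 1)) where
  carrier := {p | ∃ (b : F j) (s : I (j + 1)),
    p.1 = dF j b + Ψ (j + 1) s ∧ p.2 = - dI (j + 1) s}
  zero_mem' := ⟨0, 0, by simp, by simp⟩
  add_mem' := by
    rintro p q ⟨b, s, h1, h2⟩ ⟨b', s', h1', h2'⟩
    refine ⟨b + b', s + s', ?_, ?_⟩
    · simp only [Prod.fst_add, map_add, h1, h1']; abel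
    · simp only [Prod.snd_add, map_add, h2, h2']; abel
  neg_mem' := by
    rintro p ⟨b, s, h1, h2⟩
    refine ⟨-b, -s, ?_, ?_⟩
    · simp only [Prod.fst_neg, map_neg, h1]; abel
    · simp only [Prod.snd_neg, map_neg, h2]

/-- The group `Ĥ^{j+1}(F)` of spark classes of degree `j+1`. -/
abbrev SparkClasses (j : ℕ) :=
  SparkGroup F E I dF dI ι Ψ j ⧸
    (SparkEquivSub F I dF dI Ψ j).addSubgroupOf (SparkGroup F E I dF dI ι Ψ j)

/-- The cohomology `H^{j+2}(I)` of the complex `I*`. -/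
abbrev CohomologyI (j : ℕ) :=
  (dI (j + 1 + 1)).ker ⧸ ((dI (j + 1)).range.addSubgroupOf (dI (j + 1 + 1)).ker)

end SparkComplex

variable (F E I : ℕ → Type) [∀ k, AddCommGroup (F k)] [∀ k, AddCommGroup (E k)]
  [∀ k, AddCommGroup (I k)]
  (dF : ∀ k, F k →+ F (k + 1)) (dI : ∀ k, I k →+ I (k + 1))
  (ι : ∀ k, E k →+ F k) (Ψ : ∀ k, I k →+ F k)

/-- The subgroup `dF^{j} + Ψ(Z^{j+1}(I))` of `F^{j+1}`. -/
abbrev ModSub (j : ℕ) : AddSubgroup (F (j + 1)) :=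
  (dF j).range ⊔ AddSubgroup.map (Ψ (j + 1)) (dI (j + 1)).ker

/-- The quotient `H^{j+1}(F) ⧸ Ψ_*H^{j+1}(I) = Z^{j+1}(F) ⧸ (dF^j + Ψ(Z^{j+1}(I)))`. -/
abbrev HFmodHI (j : ℕ) :=
  (dF (j + 1)).ker ⧸ ((ModSub F I dF dI Ψ j).addSubgroupOf (dF (j + 1)).ker)

/-- `ker δ₁ ∩ ker δ₂`: spark classes represented by a spark with vanishing smooth part and
whose integral part is a boundary. -/
def KerBoth (j : ℕ) : AddSubgroup (SparkClasses F E I dF dI ι Ψ j) where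
  carrier := {x | ∃ p : SparkGroup F E I dF dI ι Ψ j,
    QuotientAddGroup.mk p = x ∧
    dF (j + 1) p.1.1 = - Ψ (j + 1 + 1) p.1.2 ∧ p.1.2 ∈ (dI (j + 1)).range}
  zero_mem' := ⟨0, by simp, by simp, by exact ⟨0, by simp⟩⟩
  add_mem' := by
    rintro x y ⟨p, hp, h0, hr⟩ ⟨q, hq, h0', hr'⟩
    refine ⟨p + q, ?_, ?_, ?_⟩
    · rw [← hp, ← hq]; rfl
    · simp only [AddSubgroup.coe_add, Prod.fst_add, Prod.snd_add, map_add, h0, h0']; abel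
    · simp only [AddSubgroup.coe_add, Prod.snd_add]
      exact add_mem hr hr'
  neg_mem' := by
    rintro x ⟨p, hp, h0, hr⟩
    refine ⟨-p, ?_, ?_, ?_⟩
    · rw [← hp]; rfl
    · simp only [AddSubgroup.coe_neg, Prod.fst_neg, Prod.snd_neg, map_neg, h0]
    · simp only [AddSubgroup.coe_neg, Prod.snd_neg]
      exact neg_mem hr

theorem ker_delta_one_inter_ker_delta_two
    (F E I : ℕ → Type) [∀ k, AddCommGroup (F k)] [∀ k, AddCommGroup (E k)]
    [∀ k, AddCommGroup (I k)]
    (dF : ∀ k, F k →+ F (k + 1)) (dE : ∀ k, E k →+ E (k + 1)) (dI : ∀ k, I k →+ I (k + 1))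
    (ι : ∀ k, E k →+ F k) (Ψ : ∀ k, I k →+ F k)
    (hdF : ∀ k (x : F k), dF (k + 1) (dF k x) = 0)
    (hdE : ∀ k (x : E k), dE (k + 1) (dE k x) = 0)
    (hdI : ∀ k (x : I k), dI (k + 1) (dI k x) = 0)
    (hι : ∀ k, Function.Injective (ι k))
    (hιd : ∀ k (e : E k), dF k (ι k e) = ι (k + 1) (dE k e))
    (hΨd : ∀ k (r : I k), dF k (Ψ k r) = Ψ (k + 1) (dI k r))
    (hmeet : ∀ k, 0 < k → ∀ (r : I k) (e : E k), Ψ k r = ι k e → ι k e = 0)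
    (hqis_surj : ∀ k (x : F (k + 1)), dF (k + 1) x = 0 →
      ∃ e : E (k + 1), dE (k + 1) e = 0 ∧ ∃ y : F k, x - ι (k + 1) e = dF k y)
    (hqis_inj : ∀ k (e : E (k + 1)), dE (k + 1) e = 0 →
      (∃ y : F k, ι (k + 1) e = dF k y) → ∃ z : E k, e = dE k z)
    (hΨ0 : Function.Injective (Ψ 0))
    (j : ℕ) :
    -- every class in `ker δ₁ ∩ ker δ₂` is represented by a `d`-closed `a ∈ F^{j+1}`
    (∀ x : SparkClasses F E I dF dI ι Ψ j, x ∈ KerBoth F E I dF dI ι Ψ j →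
      ∃ (a : F (j + 1)) (ha : dF (j + 1) a = 0),
        QuotientAddGroup.mk
          (⟨(a, 0), ⟨⟨0, by simp [ha]⟩, by simp⟩⟩ : SparkGroup F E I dF dI ι Ψ j) = x) ∧
    -- the representative is well defined modulo `dF^{j} + Ψ(Z^{j+1}(I))`
    (∀ (a a' : F (j + 1)) (ha : dF (j + 1) a = 0) (ha' : dF (j + 1) a' = 0),
      (QuotientAddGroup.mk
          (⟨(a, 0), ⟨⟨0, by simp [ha]⟩, by simp⟩⟩ : SparkGroup F E I dF dI ι Ψ j) :
        SparkClasses F E I dF dI ι Ψ j) =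
      QuotientAddGroup.mk
          (⟨(a', 0), ⟨⟨0, by simp [ha']⟩, by simp⟩⟩ : SparkGroup F E I dF dI ι Ψ j) →
      a - a' ∈ ModSub F I dF dI Ψ j) ∧
    -- and this sets up an isomorphism `ker δ₁ ∩ ker δ₂ ≅ H^{j+1}(F)/H^{j+1}_I(F)`
    Nonempty ((KerBoth F E I dF dI ι Ψ j) ≃+ HFmodHI F I dF dI Ψ j) := by

  classical
  -- the spark `(a,0)` attached to a closed element `a`
  have hcl : ∀ a : (dF (j + 1)).ker, dF (j + 1) a.1 = 0 := fun a => a.2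
  let sp : (dF (j + 1)).ker → SparkGroup F E I dF dI ι Ψ j := fun a =>
    ⟨(a.1, 0), ⟨⟨0, by simp [hcl a]⟩, by simp⟩⟩
  have sp_add : ∀ a b : (dF (j + 1)).ker, sp (a + b) = sp a + sp b := by
    intro a b
    apply Subtype.ext
    simp [sp, Prod.ext_iff]
  have sp_mem : ∀ a : (dF (j + 1)).ker,
      (QuotientAddGroup.mk (sp a) : SparkClasses F E I dF dI ι Ψ j) ∈
        KerBoth F E I dF dI ι Ψ j := by
    intro a
    exact ⟨sp a, rfl, by simp [sp, hcl a], ⟨0, by simp [sp]⟩⟩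
  let φ : (dF (j + 1)).ker →+ KerBoth F E I dF dI ι Ψ j :=
    { toFun := fun a => ⟨QuotientAddGroup.mk (sp a), sp_mem a⟩
      map_zero' := by
        apply Subtype.ext
        show (QuotientAddGroup.mk (sp 0) : SparkClasses F E I dF dI ι Ψ j) = 0
        have : sp 0 = 0 := by apply Subtype.ext; simp [sp, Prod.ext_iff]
        rw [this]; rfl
      map_add' := by
        intro a b
        apply Subtype.ext
        show (QuotientAddGroup.mk (sp (a + b)) : SparkClasses F E I dF dI ι Ψ j) =
          QuotientAddGroup.mk (sp a) + QuotientAddGroup.mk (sp b)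
        rw [sp_add]; rfl }
  -- surjectivity of φ onto KerBoth
  have hsurj : Function.Surjective φ := by
    rintro ⟨x, p, hp, h0, s, hs⟩
    have hda : dF (j + 1) (p.1.1 + Ψ (j + 1) s) = 0 := by
      rw [map_add, h0, hΨd, hs]; abel
    refine ⟨⟨p.1.1 + Ψ (j + 1) s, hda⟩, ?_⟩
    apply Subtype.ext
    show (QuotientAddGroup.mk (sp ⟨p.1.1 + Ψ (j + 1) s, hda⟩) :
      SparkClasses F E I dF dI ι Ψ j) = x
    rw [← hp]
    refine QuotientAddGroup.eq.mpr ?_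
    rw [AddSubgroup.mem_addSubgroupOf]
    refine ⟨0, -s, ?_, ?_⟩
    · show -(p.1.1 + Ψ (j + 1) s) + p.1.1 = dF j 0 + Ψ (j + 1) (-s)
      simp only [map_zero, map_neg]; abel
    · show -(0 : I (j + 1 + 1)) + p.1.2 = -dI (j + 1) (-s)
      simp [← hs]
  -- the kernel of φ is exactly ModSub ∩ Z^{j+1}(F)
  have hker : φ.ker = (ModSub F I dF dI Ψ j).addSubgroupOf (dF (j + 1)).ker := by
    ext a
    rw [AddMonoidHom.mem_ker, AddSubgroup.mem_addSubgroupOf]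
    constructor
    · intro h
      have h' : (QuotientAddGroup.mk (sp a) : SparkClasses F E I dF dI ι Ψ j) = 0 :=
        congrArg Subtype.val h
      rw [QuotientAddGroup.eq_zero_iff, AddSubgroup.mem_addSubgroupOf] at h'
      obtain ⟨b, s, h1, h2⟩ := h'
      have hzs : dI (j + 1) s = 0 := by
        have : (0 : I (j + 1 + 1)) = -dI (j + 1) s := h2
        simpa [neg_eq_iff_eq_neg] using this.symm
      rw [AddSubgroup.mem_sup]
      exact ⟨dF j b, ⟨b, rfl⟩, Ψ (j + 1) s, ⟨s, hzs, rfl⟩, h1.symm⟩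
    · intro h
      rw [AddSubgroup.mem_sup] at h
      obtain ⟨y, ⟨b, hb⟩, z, hz, hyz⟩ := h
      obtain ⟨s, hs, hsz⟩ := AddSubgroup.mem_map.mp hz
      apply Subtype.ext
      show (QuotientAddGroup.mk (sp a) : SparkClasses F E I dF dI ι Ψ j) = 0
      rw [QuotientAddGroup.eq_zero_iff, AddSubgroup.mem_addSubgroupOf]
      refine ⟨b, s, ?_, ?_⟩
      · show (a : F (j + 1)) = dF j b + Ψ (j + 1) s
        rw [← hb, ← hsz] at hyz; exact hyz.symm
      · show (0 : I (j + 1 + 1)) = -dI (j + 1) s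
        rw [AddMonoidHom.mem_ker] at hs
        rw [hs, neg_zero]
  refine ⟨?_, ?_, ?_⟩
  · -- part 1: representation by a closed element
    rintro x ⟨p, hp, h0, s, hs⟩
    have hda : dF (j + 1) (p.1.1 + Ψ (j + 1) s) = 0 := by
      rw [map_add, h0, hΨd, hs]; abel
    refine ⟨p.1.1 + Ψ (j + 1) s, hda, ?_⟩
    have := hsurj ⟨x, p, hp, h0, s, hs⟩
    rw [← hp]
    refine QuotientAddGroup.eq.mpr ?_
    rw [AddSubgroup.mem_addSubgroupOf]
    refine ⟨0, -s, ?_, ?_⟩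
    · show -(p.1.1 + Ψ (j + 1) s) + p.1.1 = dF j 0 + Ψ (j + 1) (-s)
      simp only [map_zero, map_neg]; abel
    · show -(0 : I (j + 1 + 1)) + p.1.2 = -dI (j + 1) (-s)
      simp [← hs]
  · -- part 2: well-definedness mod ModSub
    intro a a' ha ha' h
    rw [QuotientAddGroup.eq] at h
    rw [AddSubgroup.mem_addSubgroupOf] at h
    obtain ⟨b, s, h1, h2⟩ := h
    have h2' : (0 : I (j + 1 + 1)) = -dI (j + 1) s := by simpa using h2
    have hzs : dI (j + 1) s = 0 := neg_eq_zero.mp h2'.symm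
    have h1'' : -a + a' = dF j b + Ψ (j + 1) s := by simpa using h1
    have h1' : a - a' = dF j (-b) + Ψ (j + 1) (-s) := by
      simp only [map_neg, ← neg_add, ← h1'']
      abel
    rw [AddSubgroup.mem_sup]
    exact ⟨dF j (-b), ⟨-b, rfl⟩, Ψ (j + 1) (-s), ⟨-s, by simp [AddMonoidHom.mem_ker, hzs], rfl⟩,
      h1'.symm⟩
  · -- part 3: the isomorphism
    exact ⟨(QuotientAddGroup.quotientKerEquivOfSurjective φ hsurj).symm.trans
      (QuotientAddGroup.quotientAddEquivOfEq hker)⟩
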